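/- If a distribution over permutations of [n] satisfies the (p,q,δ)-block-independence property, then it satisfies the (p, δ + p²/q)-uniform-induced-ordering property; that is, for any p distinct items x_1,...,x_p, the probability that π(x_1) < π(x_2) < ... < π(x_p) is at least (1 - δ - p²/q)·(1/p!). -/

import Mathlib

open scoped Classical

noncomputable section

/-- Probability of an event under a distribution `μ` on permutations of `Fin n`. -/
def prOf {n : ℕ} (μ : Equiv.Perm (Fin n) → ℝ) (E : Set (Equiv.Perm (Fin n))) : ℝ :=
  ∑ π : Equiv.Perm (Fin n), if π ∈ E then μ π else 0

/-- `μ` is a probability distribution on permutations of `Fin n`. -/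
def IsDist {n : ℕ} (μ : Equiv.Perm (Fin n) → ℝ) : Prop :=
  (∀ π, 0 ≤ μ π) ∧ ∑ π : Equiv.Perm (Fin n), μ π = 1

/-- `B` assigns positions `[n]` to `q` consecutive blocks of size between `⌊n/q⌋` and `⌈n/q⌉`. -/
def IsBlockPartition {n q : ℕ} (B : Fin n → Fin q) : Prop :=
  Monotone B ∧ ∀ j : Fin q,
    n / q ≤ (Finset.univ.filter (fun t => B t = j)).card ∧
    (Finset.univ.filter (fun t => B t = j)).card ≤ (n + q - 1) / q

/-- The `(p,q,δ)`-block-independence property. -/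
def BIP (n p q : ℕ) (δ : ℝ) (B : Fin n → Fin q) (μ : Equiv.Perm (Fin n) → ℝ) : Prop :=
  ∀ x : Fin p → Fin n, Function.Injective x → ∀ b : Fin p → Fin q,
    (1 - δ) * (1 / (q : ℝ)) ^ p ≤ prOf μ {π | ∀ i, B (π (x i)) = b i}

/-- The `(k,δ)`-uniform-induced-ordering property. -/
def UIOP (n k : ℕ) (δ : ℝ) (μ : Equiv.Perm (Fin n) → ℝ) : Prop :=
  ∀ x : Fin k → Fin n, Function.Injective x →
    (1 - δ) / (Nat.factorial k : ℝ) ≤ prOf μ {π | StrictMono (fun i => π (x i))}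

/-- The number of strictly monotone maps `Fin p → Fin q` is `q.choose p`. -/
lemma card_strictMono_fin (p q : ℕ) :
    (Finset.univ.filter (fun b : Fin p → Fin q => StrictMono b)).card = q.choose p := by
  classical
  have hmain : (Finset.univ.filter (fun b : Fin p → Fin q => StrictMono b)).card
      = (Finset.powersetCard p (Finset.univ : Finset (Fin q))).card := by
    refine Finset.card_bij
      (fun (b : Fin p → Fin q) (_ : b ∈ Finset.univ.filter (fun b : Fin p → Fin q => StrictMono b))
        => Finset.image b Finset.univ) ?_ ?_ ?_
    · intro b hb
      have hmono : StrictMono b := (Finset.mem_filter.mp hb).2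
      rw [Finset.mem_powersetCard]
      refine ⟨Finset.subset_univ _, ?_⟩
      rw [Finset.card_image_of_injective _ hmono.injective, Finset.card_univ, Fintype.card_fin]
    · intro b hb b' hb' hbb
      have hmono : StrictMono b := (Finset.mem_filter.mp hb).2
      have hmono' : StrictMono b' := (Finset.mem_filter.mp hb').2
      have hc : (Finset.image b Finset.univ).card = p := by
        rw [Finset.card_image_of_injective _ hmono.injective, Finset.card_univ, Fintype.card_fin]
      have h1 : b = (Finset.image b Finset.univ).orderEmbOfFin hc :=
        Finset.orderEmbOfFin_unique hc (fun i => Finset.mem_image_of_mem b (Finset.mem_univ i)) hmono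
      have h2 : b' = (Finset.image b Finset.univ).orderEmbOfFin hc := by
        refine Finset.orderEmbOfFin_unique hc (fun i => ?_) hmono'
        rw [hbb]; exact Finset.mem_image_of_mem b' (Finset.mem_univ i)
      rw [h1, h2]
    · intro s hs
      rw [Finset.mem_powersetCard] at hs
      refine ⟨fun i => s.orderEmbOfFin hs.2 i, ?_, ?_⟩
      · exact Finset.mem_filter.mpr ⟨Finset.mem_univ _, (s.orderEmbOfFin hs.2).strictMono⟩
      · apply Finset.coe_injective
        rw [Finset.coe_image, Finset.coe_univ, Set.image_univ]
        exact Finset.range_orderEmbOfFin s hs.2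
  rw [hmain, Finset.card_powersetCard, Finset.card_univ, Fintype.card_fin]

lemma prOf_eq_sum_indicator {n : ℕ} (μ : Equiv.Perm (Fin n) → ℝ)
    (E : Set (Equiv.Perm (Fin n))) :
    prOf μ E = ∑ π : Equiv.Perm (Fin n), E.indicator μ π := by
  unfold prOf
  refine Finset.sum_congr rfl fun π _ => ?_
  by_cases hmem : π ∈ E <;> simp [hmem]

/-- `(p,q,δ)`-block-independence implies the
`(p, δ + p²/q)`-uniform-induced-ordering property. -/
theorem bip_implies_uiop (n p q : ℕ) (δ : ℝ) (B : Fin n → Fin q)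
    (μ : Equiv.Perm (Fin n) → ℝ) (hμ : IsDist μ) (hB : IsBlockPartition B)
    (hq : 0 < q) (hqn : q ≤ n) (hδ : 0 ≤ δ)
    (h : BIP n p q δ B μ) :
    UIOP n p (δ + (p : ℝ) ^ 2 / q) μ := by
  intro x hx
  have hμ0 := hμ.1
  have hq0 : (0:ℝ) < q := Nat.cast_pos.mpr hq
  set Big : Set (Equiv.Perm (Fin n)) := {π | StrictMono (fun i => π (x i))} with hBig
  have hprnn : 0 ≤ prOf μ Big := by
    apply Finset.sum_nonneg
    intro π _
    split
    · exact hμ0 π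
    · exact le_rfl
  by_cases hcase : 1 - (δ + (p:ℝ)^2/q) ≤ 0
  · calc (1 - (δ + (p:ℝ)^2/q)) / (Nat.factorial p : ℝ)
        ≤ 0 := div_nonpos_of_nonpos_of_nonneg hcase (by positivity)
      _ ≤ prOf μ Big := hprnn
  push_neg at hcase
  have hδ1 : δ < 1 := by
    have : (0:ℝ) ≤ (p:ℝ)^2/q := by positivity
    linarith
  have hpq : p ≤ q := by
    rcases Nat.eq_zero_or_pos p with hp0 | hp0
    · omega
    have hp2 : (p:ℝ)^2/q < 1 := by linarith
    have hp2' : (p:ℝ)^2 < q := (div_lt_one hq0).mp hp2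
    have hle : (p:ℝ) ≤ (p:ℝ)^2 := by
      have hp1 : (1:ℝ) ≤ p := by exact_mod_cast hp0
      nlinarith
    have : (p:ℝ) < q := lt_of_le_of_lt hle hp2'
    exact_mod_cast this.le
  set T : Finset (Fin p → Fin q) := Finset.univ.filter (fun b => StrictMono b) with hT
  set E : (Fin p → Fin q) → Set (Equiv.Perm (Fin n)) :=
    fun b => {π | ∀ i, B (π (x i)) = b i} with hE
  have key : ∀ π : Equiv.Perm (Fin n),
      (∑ b ∈ T, (E b).indicator μ π) ≤ Big.indicator μ π := by
    intro π
    simp only [Set.indicator_apply]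
    have hfilter : ∑ b ∈ T, (if π ∈ E b then μ π else 0)
        = ∑ b ∈ T.filter (fun b => π ∈ E b), μ π := (Finset.sum_filter _ _).symm
    rcases (T.filter (fun b => π ∈ E b)).eq_empty_or_nonempty with he | ⟨b0, hb0⟩
    · rw [hfilter, he, Finset.sum_empty]
      split
      · exact hμ0 π
      · exact le_rfl
    · have hb0' := Finset.mem_filter.mp hb0
      have hb0T : StrictMono b0 := (Finset.mem_filter.mp hb0'.1).2
      have hb0E : ∀ i, B (π (x i)) = b0 i := hb0'.2
      have hBigmem : π ∈ Big := by
        intro i j hij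
        by_contra hcon
        push_neg at hcon
        have hle : B (π (x j)) ≤ B (π (x i)) := hB.1 hcon
        rw [hb0E i, hb0E j] at hle
        exact absurd (hb0T hij) (not_lt.mpr hle)
      have hsingle : T.filter (fun b => π ∈ E b) = {b0} := by
        apply Finset.eq_singleton_iff_unique_mem.mpr
        refine ⟨hb0, fun b hb => ?_⟩
        have hbE : ∀ i, B (π (x i)) = b i := (Finset.mem_filter.mp hb).2
        funext i
        rw [← hbE i, hb0E i]
      rw [hfilter, hsingle, Finset.sum_singleton, if_pos hBigmem]
  have hsum : ∑ b ∈ T, prOf μ (E b) ≤ prOf μ Big := by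
    rw [prOf_eq_sum_indicator]
    calc ∑ b ∈ T, prOf μ (E b)
        = ∑ b ∈ T, ∑ π : Equiv.Perm (Fin n), (E b).indicator μ π :=
          Finset.sum_congr rfl fun b _ => prOf_eq_sum_indicator μ (E b)
      _ = ∑ π : Equiv.Perm (Fin n), ∑ b ∈ T, (E b).indicator μ π := Finset.sum_comm
      _ ≤ ∑ π : Equiv.Perm (Fin n), Big.indicator μ π :=
          Finset.sum_le_sum fun π _ => key π
  have hlow : (q.choose p : ℝ) * ((1 - δ) * (1 / (q:ℝ)) ^ p) ≤ ∑ b ∈ T, prOf μ (E b) := by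
    have hb := Finset.card_nsmul_le_sum T (fun b => prOf μ (E b)) ((1 - δ) * (1 / (q:ℝ)) ^ p)
      (fun b _ => h x hx b)
    rw [hT, card_strictMono_fin p q] at hb
    simpa [nsmul_eq_mul] using hb
  refine le_trans ?_ (le_trans hlow hsum)
  -- numeric part
  have hfp : (0:ℝ) < (Nat.factorial p : ℝ) := by exact_mod_cast Nat.factorial_pos p
  have hqp : (0:ℝ) ≤ (q:ℝ) - p := by
    have : (p:ℝ) ≤ q := by exact_mod_cast hpq
    linarith
  have hchoose : ((q:ℝ) - p) ^ p / (Nat.factorial p : ℝ) ≤ (q.choose p : ℝ) := by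
    have h1 : (((q + 1 - p : ℕ):ℝ)) ^ p / (Nat.factorial p : ℝ) ≤ (q.choose p : ℝ) :=
      Nat.pow_le_choose p q
    have hcast : (((q + 1 - p : ℕ):ℝ)) = (q:ℝ) + 1 - p := by
      have hle : p ≤ q + 1 := by omega
      push_cast [hle]
      ring
    refine le_trans ?_ h1
    rw [hcast]
    exact (div_le_div_iff_of_pos_right hfp).mpr (pow_le_pow_left₀ hqp (by linarith) p)
  have hbern : 1 - (p:ℝ)^2/q ≤ (((q:ℝ) - p)/q) ^ p := by
    have ha : (-2:ℝ) ≤ -((p:ℝ)/q) := by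
      have : (p:ℝ)/q ≤ 1 := by
        rw [div_le_one hq0]; exact_mod_cast hpq
      linarith
    have := one_add_mul_le_pow ha p
    have heq : (1:ℝ) + -((p:ℝ)/q) = ((q:ℝ) - p)/q := by field_simp; ring
    have heq2 : (1:ℝ) + (p:ℝ) * -((p:ℝ)/q) = 1 - (p:ℝ)^2/q := by ring
    rw [heq, heq2] at this
    exact this
  calc (1 - (δ + (p:ℝ)^2/q)) / (Nat.factorial p : ℝ)
      ≤ ((1 - δ) * (1 - (p:ℝ)^2/q)) / (Nat.factorial p : ℝ) := by
        gcongr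
        nlinarith [mul_nonneg hδ (by positivity : (0:ℝ) ≤ (p:ℝ)^2/q)]
    _ ≤ ((1 - δ) * (((q:ℝ) - p)/q) ^ p) / (Nat.factorial p : ℝ) := by
        gcongr
    _ = (((q:ℝ) - p) ^ p / (Nat.factorial p : ℝ)) * ((1 - δ) * (1/(q:ℝ))^p) := by
        rw [div_pow]
        field_simp
        have hqinv : (q:ℝ)^p * ((q:ℝ)⁻¹)^p = 1 := by rw [← mul_pow, mul_inv_cancel₀ hq0.ne', one_pow]
        linear_combination (δ * ((q:ℝ) - p)^p - ((q:ℝ) - p)^p) * hqinv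
    _ ≤ (q.choose p : ℝ) * ((1 - δ) * (1 / (q:ℝ)) ^ p) := by
        have hc0 : (0:ℝ) ≤ (1 - δ) * (1/(q:ℝ))^p := mul_nonneg (by linarith) (by positivity)
        exact mul_le_mul_of_nonneg_right hchoose hc0
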